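/- With S(a) = π·∫_0^∞ Erfc(1/√t) N_t(a) t^{-1} dt for a > 0, the function S satisfies the ODE S'(a) = 2/(a + a³) − S(a)/a on (0,∞), together with S(1) = π/2. -/

import Mathlib

open Real MeasureTheory Set


lemma intexp : Integrable (fun x : ℝ => Real.exp (-(x ^ 2))) := by
  simpa [neg_mul, one_mul] using integrable_exp_neg_mul_sq one_pos

lemma intxexp : Integrable (fun x : ℝ => |x * Real.exp (-(x ^ 2))|) := by
  have := (integrable_mul_exp_neg_mul_sq one_pos).abs
  simpa [neg_mul, one_mul] using this

lemma int_Ioi_mul_exp {b : ℝ} (hb : 0 < b) :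
    ∫ x in Set.Ioi (0:ℝ), x * Real.exp (-(b * x ^ 2)) = (2 * b)⁻¹ := by
  have hderiv : ∀ x ∈ Set.Ioi (0:ℝ),
      HasDerivAt (fun x => -(2*b)⁻¹ * Real.exp (-(b * x^2))) (x * Real.exp (-(b * x ^ 2))) x := by
    intro x hx
    have h1 : HasDerivAt (fun x : ℝ => -(b * x ^ 2)) (-(b * (2 * x))) x := by
      exact (((hasDerivAt_pow 2 x).const_mul b).neg).congr_deriv (by simp)
    have := (h1.exp).const_mul (-(2*b)⁻¹)
    refine this.congr_deriv ?_
    field_simp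
  have hint : IntegrableOn (fun x : ℝ => x * Real.exp (-(b * x ^ 2))) (Set.Ioi 0) := by
    have := integrable_mul_exp_neg_mul_sq hb
    simpa [neg_mul] using this.integrableOn
  have htend : Filter.Tendsto (fun x : ℝ => -(2*b)⁻¹ * Real.exp (-(b * x^2)))
      Filter.atTop (nhds 0) := by
    have h2 : Filter.Tendsto (fun x : ℝ => b * x ^ 2) Filter.atTop Filter.atTop :=
      (Filter.tendsto_pow_atTop two_ne_zero).const_mul_atTop hb
    have h3 := Real.tendsto_exp_atBot.comp (Filter.tendsto_neg_atTop_atBot.comp h2)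
    have := h3.const_mul (-(2*b)⁻¹)
    simpa using this
  have := MeasureTheory.integral_Ioi_of_hasDerivAt_of_tendsto
    (by fun_prop : Continuous (fun x : ℝ => -(2*b)⁻¹ * Real.exp (-(b * x^2)))).continuousWithinAt
    hderiv hint htend
  rw [this]
  simp

/-- The Gaussian kernel `N_t(x) = (π t)^{-1/2} exp(-x²/t)`. -/
noncomputable def gaussN (t x : ℝ) : ℝ := (Real.sqrt (Real.pi * t))⁻¹ * Real.exp (-(x ^ 2) / t)

/-- The complementary error function `Erfc(s) = 2 ∫_s^∞ π^{-1/2} e^{-x²} dx`. -/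
noncomputable def Erfc (s : ℝ) : ℝ :=
  2 * ∫ x in Set.Ioi s, (Real.sqrt Real.pi)⁻¹ * Real.exp (-(x ^ 2))

/-- `S(a) = π ∫_0^∞ Erfc(1/√t) N_t(a) t⁻¹ dt`. -/
noncomputable def Sfun (a : ℝ) : ℝ :=
  Real.pi * ∫ t in Set.Ioi (0 : ℝ), Erfc (1 / Real.sqrt t) * gaussN t a * t⁻¹

-- Step A: change of variables t = a^2/s^2
lemma stepA {a : ℝ} (ha : 0 < a) :
    Sfun a = (4 / a) * ∫ s in Set.Ioi (0:ℝ),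
      Real.exp (-(s^2)) * ∫ x in Set.Ioi (s/a), Real.exp (-(x^2)) := by
  have himg : (fun s : ℝ => a^2 / s^2) '' Set.Ioi 0 = Set.Ioi 0 := by
    ext t
    simp only [Set.mem_image, Set.mem_Ioi]
    constructor
    · rintro ⟨s, hs, rfl⟩
      positivity
    · intro ht
      refine ⟨a / Real.sqrt t, by positivity, ?_⟩
      rw [div_pow, Real.sq_sqrt ht.le]
      field_simp
  have hderiv : ∀ s ∈ Set.Ioi (0:ℝ), HasDerivWithinAt (fun s : ℝ => a^2 / s^2)
      (-(2 * a^2) / s^3) (Set.Ioi 0) s := by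
    intro s hs
    have hs0 : (0:ℝ) < s := hs
    have h := (hasDerivAt_const s (a^2)).div (hasDerivAt_pow 2 s) (by positivity)
    have h' := h.hasDerivWithinAt (s := Set.Ioi 0)
    refine h'.congr_deriv ?_
    push_cast
    field_simp
    ring
  have hinj : Set.InjOn (fun s : ℝ => a^2 / s^2) (Set.Ioi 0) := by
    intro s hs r hr h
    simp only [Set.mem_Ioi] at hs hr
    simp only at h
    have h2 : r^2 = s^2 := by
      have ha2 : (0:ℝ) < a^2 := by positivity
      field_simp at h
      nlinarith
    nlinarith
  rw [Sfun]
  conv_lhs => rw [← himg, integral_image_eq_integral_abs_deriv_smul measurableSet_Ioi hderiv hinj]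
  have key : ∀ s ∈ Set.Ioi (0:ℝ),
      |(-(2 * a^2) / s^3)| • (Erfc (1 / Real.sqrt (a^2 / s^2)) * gaussN (a^2 / s^2) a * (a^2 / s^2)⁻¹)
      = (4 / (Real.pi * a)) * (Real.exp (-(s^2)) * ∫ x in Set.Ioi (s/a), Real.exp (-(x^2))) := by
    intro s hs
    have hs0 : (0:ℝ) < s := hs
    have hsq : a^2 / s^2 = (a/s)^2 := by rw [div_pow]
    have hsqrt : Real.sqrt (a^2 / s^2) = a / s := by
      rw [hsq, Real.sqrt_sq (by positivity)]
    have habs : |(-(2 * a^2) / s^3)| = 2 * a^2 / s^3 := by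
      rw [neg_div, abs_neg, abs_of_pos (by positivity)]
    rw [habs, hsqrt, one_div_div, gaussN, Erfc]
    rw [MeasureTheory.integral_const_mul ((Real.sqrt Real.pi)⁻¹) (fun x => Real.exp (-(x^2)))]
    have harg : -(a ^ 2) / (a^2 / s^2) = -(s^2) := by
      field_simp
    have hsqrt2 : Real.sqrt (Real.pi * (a^2 / s^2)) = Real.sqrt Real.pi * (a / s) := by
      rw [Real.sqrt_mul Real.pi_pos.le, hsqrt]
    rw [harg, hsqrt2]
    have hpi : Real.sqrt Real.pi * Real.sqrt Real.pi = Real.pi :=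
      Real.mul_self_sqrt Real.pi_pos.le
    have hspos := Real.sqrt_pos.mpr Real.pi_pos
    set I := ∫ x in Set.Ioi (s/a), Real.exp (-(x^2)) with hI
    rw [smul_eq_mul]
    field_simp
    ring_nf
    rw [Real.sq_sqrt Real.pi_pos.le]
  rw [MeasureTheory.setIntegral_congr_fun measurableSet_Ioi key,
    MeasureTheory.integral_const_mul]
  have hpi0 := Real.pi_pos
  field_simp



lemma stepB {a : ℝ} (ha : 0 < a) :
    (∫ s in Set.Ioi (0:ℝ), Real.exp (-(s^2)) * ∫ x in Set.Ioi (s/a), Real.exp (-(x^2)))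
    = ∫ x in Set.Ioi (0:ℝ), x * ∫ u in (0:ℝ)..a, Real.exp (-((1+u^2) * x^2)) := by
  set F : ℝ → ℝ → ℝ := fun s x => if s < a * x then Real.exp (-(s^2)) * Real.exp (-(x^2)) else 0
    with hF
  have hFind : ∀ s x, F s x
      = Set.indicator {p : ℝ × ℝ | p.1 < a * p.2}
        (fun p => Real.exp (-(p.1^2)) * Real.exp (-(p.2^2))) (s, x) := by
    intro s x
    simp [hF, Set.indicator_apply]
  have hmeas : MeasurableSet {p : ℝ × ℝ | p.1 < a * p.2} :=
    (isOpen_lt continuous_fst (continuous_const.mul continuous_snd)).measurableSet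
  have hint : Integrable (Function.uncurry F)
      ((volume.restrict (Set.Ioi 0)).prod (volume.restrict (Set.Ioi 0))) := by
    have hbase : Integrable (fun p : ℝ × ℝ => Real.exp (-(p.1^2)) * Real.exp (-(p.2^2)))
        ((volume.restrict (Set.Ioi 0)).prod (volume.restrict (Set.Ioi 0))) :=
      Integrable.mul_prod intexp.restrict intexp.restrict
    have heq : Function.uncurry F = Set.indicator {p : ℝ × ℝ | p.1 < a * p.2}
        (fun p => Real.exp (-(p.1^2)) * Real.exp (-(p.2^2))) := by
      funext p
      rw [Function.uncurry]
      exact hFind p.1 p.2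
    rw [heq]
    exact hbase.indicator hmeas
  have step1 : ∀ s ∈ Set.Ioi (0:ℝ),
      Real.exp (-(s^2)) * ∫ x in Set.Ioi (s/a), Real.exp (-(x^2))
      = ∫ x in Set.Ioi (0:ℝ), F s x := by
    intro s hs
    have hs0 : (0:ℝ) < s := hs
    have h1 : ∀ x, F s x = (Set.Ioi (s/a)).indicator
        (fun x => Real.exp (-(s^2)) * Real.exp (-(x^2))) x := by
      intro x
      simp only [hF, Set.indicator_apply, Set.mem_Ioi]
      congr 1
      simp [div_lt_iff₀' ha, eq_iff_iff, mul_comm]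
    calc Real.exp (-(s^2)) * ∫ x in Set.Ioi (s/a), Real.exp (-(x^2))
        = ∫ x in Set.Ioi (s/a), Real.exp (-(s^2)) * Real.exp (-(x^2)) := by
          rw [MeasureTheory.integral_const_mul]
      _ = ∫ x in Set.Ioi (0:ℝ) ∩ Set.Ioi (s/a), Real.exp (-(s^2)) * Real.exp (-(x^2)) := by
          rw [Set.Ioi_inter_Ioi, max_eq_right (by positivity)]
      _ = ∫ x in Set.Ioi (0:ℝ), F s x := by
          rw [← MeasureTheory.setIntegral_indicator measurableSet_Ioi]
          exact setIntegral_congr_fun measurableSet_Ioi (fun x _ => (h1 x).symm)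
  have step2 : ∀ x ∈ Set.Ioi (0:ℝ),
      (∫ s in Set.Ioi (0:ℝ), F s x)
      = x * ∫ u in (0:ℝ)..a, Real.exp (-((1+u^2) * x^2)) := by
    intro x hx
    have hx0 : (0:ℝ) < x := hx
    have h1 : ∀ s, F s x = (Set.Iio (a*x)).indicator
        (fun s => Real.exp (-(s^2)) * Real.exp (-(x^2))) s := by
      intro s
      simp [hF, Set.indicator_apply]
    calc (∫ s in Set.Ioi (0:ℝ), F s x)
        = ∫ s in Set.Ioi (0:ℝ) ∩ Set.Iio (a*x), Real.exp (-(s^2)) * Real.exp (-(x^2)) := by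
          rw [← MeasureTheory.setIntegral_indicator measurableSet_Iio]
          exact setIntegral_congr_fun measurableSet_Ioi (fun s _ => h1 s)
      _ = (∫ s in Set.Ioo (0:ℝ) (a*x), Real.exp (-(s^2))) * Real.exp (-(x^2)) := by
          rw [Set.Ioi_inter_Iio, MeasureTheory.integral_mul_const]
      _ = (∫ s in (0:ℝ)..(a*x), Real.exp (-(s^2))) * Real.exp (-(x^2)) := by
          rw [intervalIntegral.integral_of_le (by positivity), integral_Ioc_eq_integral_Ioo]
      _ = (x * ∫ u in (0:ℝ)..a, Real.exp (-((x*u)^2))) * Real.exp (-(x^2)) := by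
          rw [intervalIntegral.integral_comp_mul_left (fun s => Real.exp (-(s^2))) hx0.ne']
          rw [smul_eq_mul, mul_zero, mul_comm x a]
          field_simp
      _ = x * ∫ u in (0:ℝ)..a, Real.exp (-((1+u^2) * x^2)) := by
          rw [mul_assoc]
          congr 1
          rw [← intervalIntegral.integral_mul_const]
          refine intervalIntegral.integral_congr (fun u _ => ?_)
          rw [← Real.exp_add]
          congr 1
          ring
  rw [MeasureTheory.setIntegral_congr_fun measurableSet_Ioi step1,
    MeasureTheory.integral_integral_swap hint]
  exact MeasureTheory.setIntegral_congr_fun measurableSet_Ioi step2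

lemma stepC {a : ℝ} (ha : 0 < a) :
    (∫ x in Set.Ioi (0:ℝ), x * ∫ u in (0:ℝ)..a, Real.exp (-((1+u^2) * x^2)))
    = Real.arctan a / 2 := by
  have hIoc : ∀ x : ℝ, x * (∫ u in (0:ℝ)..a, Real.exp (-((1+u^2) * x^2)))
      = ∫ u in Set.Ioc (0:ℝ) a, x * Real.exp (-((1+u^2) * x^2)) := by
    intro x
    rw [intervalIntegral.integral_of_le ha.le, MeasureTheory.integral_const_mul]
  have hint : Integrable (Function.uncurry fun x u => x * Real.exp (-((1+u^2) * x^2)))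
      ((volume.restrict (Set.Ioi 0)).prod (volume.restrict (Set.Ioc 0 a))) := by
    have hbound : Integrable (fun p : ℝ × ℝ => |p.1 * Real.exp (-(p.1^2))| * 1)
        ((volume.restrict (Set.Ioi 0)).prod (volume.restrict (Set.Ioc 0 a))) := by
      have h2 : Integrable (fun _ : ℝ => (1:ℝ)) (volume.restrict (Set.Ioc 0 a)) :=
        MeasureTheory.integrableOn_const measure_Ioc_lt_top.ne
      exact Integrable.mul_prod (intxexp.restrict (s := Set.Ioi 0)) h2
    refine hbound.mono' ?_ ?_
    · apply Continuous.aestronglyMeasurable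
      fun_prop
    · refine MeasureTheory.ae_of_all _ (fun p => ?_)
      simp only [Function.uncurry, Real.norm_eq_abs, abs_mul, Real.abs_exp, mul_one]
      refine mul_le_mul_of_nonneg_left ?_ (abs_nonneg _)
      refine Real.exp_le_exp.mpr ?_
      nlinarith [sq_nonneg p.2, sq_nonneg p.1]
  calc (∫ x in Set.Ioi (0:ℝ), x * ∫ u in (0:ℝ)..a, Real.exp (-((1+u^2) * x^2)))
      = ∫ x in Set.Ioi (0:ℝ), ∫ u in Set.Ioc (0:ℝ) a, x * Real.exp (-((1+u^2) * x^2)) := by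
        exact MeasureTheory.setIntegral_congr_fun measurableSet_Ioi (fun x _ => hIoc x)
    _ = ∫ u in Set.Ioc (0:ℝ) a, ∫ x in Set.Ioi (0:ℝ), x * Real.exp (-((1+u^2) * x^2)) := by
        exact MeasureTheory.integral_integral_swap (f := fun x u => x * Real.exp (-((1+u^2) * x^2))) hint
    _ = ∫ u in Set.Ioc (0:ℝ) a, (2 * (1+u^2))⁻¹ := by
        refine MeasureTheory.setIntegral_congr_fun measurableSet_Ioc (fun u _ => ?_)
        exact int_Ioi_mul_exp (by positivity)
    _ = ∫ u in (0:ℝ)..a, (1/2) * (1 / (1+u^2)) := by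
        rw [intervalIntegral.integral_of_le ha.le]
        refine MeasureTheory.setIntegral_congr_fun measurableSet_Ioc (fun u _ => ?_)
        rw [mul_inv]
        ring
    _ = Real.arctan a / 2 := by
        rw [intervalIntegral.integral_const_mul, integral_one_div_one_add_sq]
        rw [Real.arctan_zero]
        ring

lemma Sfun_eq {a : ℝ} (ha : 0 < a) : Sfun a = 2 * Real.arctan a / a := by
  rw [stepA ha, stepB ha, stepC ha]
  field_simp
  ring

theorem Sfun_ode :
    (∀ a : ℝ, 0 < a → HasDerivAt Sfun (2 / (a + a ^ 3) - Sfun a / a) a) ∧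
      Sfun 1 = Real.pi / 2 := by
  constructor
  · intro a ha
    have h2 : HasDerivAt (fun a : ℝ => 2 * Real.arctan a) (2 * (1 / (1 + a^2))) a :=
      (Real.hasDerivAt_arctan a).const_mul 2
    have h3 := h2.div (hasDerivAt_id a) ha.ne'
    have h1 : HasDerivAt (fun a : ℝ => 2 * Real.arctan a / a)
        (2 / (a + a^3) - (2 * Real.arctan a / a) / a) a := by
      refine h3.congr_deriv ?_
      have h4 : (0:ℝ) < 1 + a^2 := by positivity
      simp only [id]
      field_simp
    have heq : Sfun =ᶠ[nhds a] fun a => 2 * Real.arctan a / a := by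
      filter_upwards [Ioi_mem_nhds ha] with b hb using Sfun_eq hb
    rw [show 2 / (a + a ^ 3) - Sfun a / a
        = 2 / (a + a^3) - (2 * Real.arctan a / a) / a by rw [Sfun_eq ha]]
    exact h1.congr_of_eventuallyEq heq
  · rw [Sfun_eq one_pos, Real.arctan_one]
    ring
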